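/- For every prime p and integer n ≥ 2, the zero-divisor graph Γ(ℤ_{p^n}) is an interval graph, i.e., box(Γ(ℤ_{p^n})) = 1. -/
import Mathlib


open SimpleGraph Finset

/-- A representation of `G` as intersection graph of boxes in `ℝ^ℓ`
(products of `ℓ` closed bounded intervals). -/
def BoxRep {V : Type*} (G : SimpleGraph V) (ℓ : ℕ) : Prop :=
  ∃ f : V → Fin ℓ → ℝ × ℝ,
    (∀ v i, (f v i).1 ≤ (f v i).2) ∧
    ∀ u v : V, u ≠ v →
      (G.Adj u v ↔ ∀ i, max (f u i).1 (f v i).1 ≤ min (f u i).2 (f v i).2)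

/-- The boxicity of a graph: the least positive `ℓ` admitting a box representation. -/
noncomputable def boxicity {V : Type*} (G : SimpleGraph V) : ℕ :=
  sInf {ℓ : ℕ | 0 < ℓ ∧ BoxRep G ℓ}

/-- A graph is an interval graph iff it has a box representation in dimension 1. -/
def IsIntervalGraph {V : Type*} (G : SimpleGraph V) : Prop := BoxRep G 1

/-- A graph is not complete. -/
def NotComplete {V : Type*} (G : SimpleGraph V) : Prop := ∃ a b : V, a ≠ b ∧ ¬ G.Adj a b

/-- The circular clique `G_k^d`: vertices `a_0, …, a_{k-1}`, with `a_i ~ a_j`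
iff `d ≤ |i - j| ≤ k - d`. -/
def circularClique (k d : ℕ) : SimpleGraph (Fin k) :=
  SimpleGraph.fromRel (fun i j =>
    d ≤ ((i : ℤ) - (j : ℤ)).natAbs ∧ ((i : ℤ) - (j : ℤ)).natAbs ≤ k - d)

/-- The `G`-generalized join `G[H₁, …, Hₙ]`. -/
def genJoin {n : ℕ} {V : Fin n → Type*} (G : SimpleGraph (Fin n))
    (H : ∀ i, SimpleGraph (V i)) : SimpleGraph (Σ i, V i) :=
  SimpleGraph.fromRel (fun x y =>
    G.Adj x.1 y.1 ∨ ∃ h : x.1 = y.1, (H y.1).Adj (h ▸ x.2) y.2)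

/-- The join `G ∨ H` of two disjoint graphs. -/
def graphJoin {α β : Type*} (G : SimpleGraph α) (H : SimpleGraph β) :
    SimpleGraph (α ⊕ β) :=
  SimpleGraph.fromRel (fun x y =>
    match x, y with
    | .inl a, .inl b => G.Adj a b
    | .inr a, .inr b => H.Adj a b
    | _, _ => True)

/-- The equivalence `x ∼ y ↔ N(x) = N(y)` (equal open neighborhoods). -/
def nbhdSetoid {V : Type*} (G : SimpleGraph V) : Setoid V :=
  ⟨fun x y => G.neighborSet x = G.neighborSet y,
    ⟨fun _ => rfl, Eq.symm, Eq.trans⟩⟩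

/-- The reduced graph of `G`: vertices are the classes of `nbhdSetoid G`,
with `[x] ~ [y]` iff `x ~ y` in `G`. -/
def reducedGraph {V : Type*} (G : SimpleGraph V) :
    SimpleGraph (Quotient (nbhdSetoid G)) :=
  SimpleGraph.fromRel (fun a b =>
    ∃ x y : V, Quotient.mk (nbhdSetoid G) x = a ∧ Quotient.mk (nbhdSetoid G) y = b ∧ G.Adj x y)

/-- The zero-divisor graph of a commutative ring: vertices are the nonzero
zero-divisors, with `x ~ y` iff `x * y = 0`. -/
def zeroDivisorGraph (R : Type*) [CommRing R] :
    SimpleGraph {x : R // x ≠ 0 ∧ ∃ y : R, y ≠ 0 ∧ x * y = 0} :=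
  SimpleGraph.fromRel (fun x y => (x : R) * (y : R) = 0)

/-- Equivalence on a ring: equal annihilators. -/
def annSetoid (R : Type*) [CommRing R] : Setoid R :=
  ⟨fun x y => ∀ r : R, x * r = 0 ↔ y * r = 0,
    ⟨fun _ _ => Iff.rfl, fun h r => (h r).symm, fun h h' r => (h r).trans (h' r)⟩⟩

/-- Vertices of the compressed zero-divisor graph: annihilator classes
other than the class of `0` and the class of `1`. -/
def CompressedVertex (R : Type*) [CommRing R] : Type _ :=
  {c : Quotient (annSetoid R) //
    c ≠ Quotient.mk (annSetoid R) 0 ∧ c ≠ Quotient.mk (annSetoid R) 1}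

/-- The compressed zero-divisor graph `Γ_E(R)`. -/
def compressedZDG (R : Type*) [CommRing R] : SimpleGraph (CompressedVertex R) :=
  SimpleGraph.fromRel (fun c c' =>
    ∃ x y : R, Quotient.mk (annSetoid R) x = c.1 ∧ Quotient.mk (annSetoid R) y = c'.1 ∧ x * y = 0)

/-- The graph of proper divisors of `N` (`1 < d < N`), `d ~ d'` iff `N ∣ d * d'`;
this is the compressed zero-divisor graph of `ℤ_N`. -/
def divisorGraph (N : ℕ) : SimpleGraph {d : ℕ // d ∣ N ∧ 1 < d ∧ d < N} :=
  SimpleGraph.fromRel (fun d e => N ∣ d.1 * e.1)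


/-- Auxiliary interval assignment for the zero-divisor graph of `ℤ_{pⁿ}`. -/
noncomputable def intervalF (n : ℕ) {V : Type*} (A : V → ℕ) (e : V → ℝ) (x : V) : ℝ × ℝ :=
  if n ≤ 2 * A x then (((n : ℝ) - A x), (A x : ℝ))
  else ((n : ℝ) - A x - 1/2 + e x, (n : ℝ) - A x - 1/2 + e x)

lemma intervalF_high {n : ℕ} {V : Type*} {A : V → ℕ} {e : V → ℝ} {x : V}
    (h : n ≤ 2 * A x) : intervalF n A e x = (((n : ℝ) - A x), (A x : ℝ)) := if_pos h

lemma intervalF_low {n : ℕ} {V : Type*} {A : V → ℕ} {e : V → ℝ} {x : V}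
    (h : ¬ n ≤ 2 * A x) :
    intervalF n A e x = ((n : ℝ) - A x - 1/2 + e x, (n : ℝ) - A x - 1/2 + e x) := if_neg h

/-- Any graph whose adjacency is `n ≤ A u + A v` for a valuation-like function `A`
(with an injective small perturbation `e`) has a box representation in dimension 1. -/
lemma boxAux {V : Type*} (G : SimpleGraph V) (n : ℕ) (A : V → ℕ) (e : V → ℝ)
    (hAlt : ∀ x, A x < n)
    (he0 : ∀ x, 0 ≤ e x) (he4 : ∀ x, e x < 1/4)
    (heinj : ∀ x y, e x = e y → x = y)
    (hadj : ∀ u v, u ≠ v → (G.Adj u v ↔ n ≤ A u + A v)) : BoxRep G 1 := by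
  have key : ∀ u v : V, u ≠ v →
      ((max (intervalF n A e u).1 (intervalF n A e v).1 ≤
        min (intervalF n A e u).2 (intervalF n A e v).2) ↔ n ≤ A u + A v) := by
    intro u v huv
    have heu0 := he0 u; have hev0 := he0 v
    have heu4 := he4 u; have hev4 := he4 v
    by_cases hu : n ≤ 2 * A u <;> by_cases hv : n ≤ 2 * A v
    · rw [intervalF_high hu, intervalF_high hv]
      show max ((n:ℝ) - A u) ((n:ℝ) - A v) ≤ min (A u : ℝ) (A v : ℝ) ↔ n ≤ A u + A v
      have hu' : (n : ℝ) ≤ 2 * A u := by exact_mod_cast hu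
      have hv' : (n : ℝ) ≤ 2 * A v := by exact_mod_cast hv
      rw [max_le_iff, le_min_iff, le_min_iff]
      constructor
      · intro _; omega
      · intro _; exact ⟨⟨by linarith, by linarith⟩, by linarith, by linarith⟩
    · rw [intervalF_high hu, intervalF_low hv]
      show max ((n:ℝ) - A u) ((n:ℝ) - A v - 1/2 + e v) ≤
          min (A u : ℝ) ((n:ℝ) - A v - 1/2 + e v) ↔ n ≤ A u + A v
      have hu' : (n : ℝ) ≤ 2 * A u := by exact_mod_cast hu
      have hv' : 2 * (A v : ℝ) + 1 ≤ n := by exact_mod_cast (show 2 * A v + 1 ≤ n by omega)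
      rw [max_le_iff, le_min_iff, le_min_iff]
      constructor
      · rintro ⟨-, h3, -⟩
        have hlt : (n : ℝ) < ((A u + A v + 1 : ℕ) : ℝ) := by push_cast; linarith
        have := Nat.cast_lt.mp hlt
        omega
      · intro h
        have h' : (n : ℝ) ≤ (A u : ℝ) + (A v : ℝ) := by exact_mod_cast h
        have hBA : (A v : ℝ) + 1 ≤ A u := by exact_mod_cast (show A v + 1 ≤ A u by omega)
        exact ⟨⟨by linarith, by linarith⟩, by linarith, le_refl _⟩
    · rw [intervalF_low hu, intervalF_high hv]
      show max ((n:ℝ) - A u - 1/2 + e u) ((n:ℝ) - A v) ≤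
          min ((n:ℝ) - A u - 1/2 + e u) (A v : ℝ) ↔ n ≤ A u + A v
      have hv' : (n : ℝ) ≤ 2 * A v := by exact_mod_cast hv
      have hu' : 2 * (A u : ℝ) + 1 ≤ n := by exact_mod_cast (show 2 * A u + 1 ≤ n by omega)
      rw [max_le_iff, le_min_iff, le_min_iff]
      constructor
      · rintro ⟨⟨-, h2⟩, -⟩
        have hlt : (n : ℝ) < ((A u + A v + 1 : ℕ) : ℝ) := by push_cast; linarith
        have := Nat.cast_lt.mp hlt
        omega
      · intro h
        have h' : (n : ℝ) ≤ (A u : ℝ) + (A v : ℝ) := by exact_mod_cast h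
        have hBA : (A u : ℝ) + 1 ≤ A v := by exact_mod_cast (show A u + 1 ≤ A v by omega)
        exact ⟨⟨le_refl _, by linarith⟩, by linarith, by linarith⟩
    · rw [intervalF_low hu, intervalF_low hv]
      show max ((n:ℝ) - A u - 1/2 + e u) ((n:ℝ) - A v - 1/2 + e v) ≤
          min ((n:ℝ) - A u - 1/2 + e u) ((n:ℝ) - A v - 1/2 + e v) ↔ n ≤ A u + A v
      have hne : ((n:ℝ) - A u - 1/2 + e u) ≠ ((n:ℝ) - A v - 1/2 + e v) := by
        intro heq
        by_cases hAB : A u = A v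
        · refine huv (heinj u v ?_)
          have hc : (A u : ℝ) = A v := by exact_mod_cast hAB
          linarith
        · rcases Nat.lt_or_ge (A u) (A v) with hlt | hge
          · have h1 : (A u : ℝ) + 1 ≤ A v := by exact_mod_cast (show A u + 1 ≤ A v by omega)
            linarith
          · have h1 : (A v : ℝ) + 1 ≤ A u := by exact_mod_cast (show A v + 1 ≤ A u by omega)
            linarith
      rw [max_le_iff, le_min_iff, le_min_iff]
      constructor
      · rintro ⟨⟨-, h2⟩, h3, -⟩
        exact absurd (le_antisymm h2 h3) hne
      · intro h
        exact absurd h (by omega)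
  refine ⟨fun x _ => intervalF n A e x, ?_, ?_⟩
  · intro x i
    show (intervalF n A e x).1 ≤ (intervalF n A e x).2
    by_cases hx : n ≤ 2 * A x
    · rw [intervalF_high hx]
      have : (n : ℝ) ≤ 2 * A x := by exact_mod_cast hx
      show (n : ℝ) - A x ≤ (A x : ℝ)
      linarith
    · rw [intervalF_low hx]
  · intro u v huv
    rw [hadj u v huv]
    constructor
    · intro h i
      exact (key u v huv).mpr h
    · intro h
      exact (key u v huv).mp (h 0)

/-- For every prime `p` and `n ≥ 2`, `Γ(ℤ_{pⁿ})` is an interval graph, i.e. its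
boxicity is 1. -/
theorem zeroDivisorGraph_prime_pow_interval (p n : ℕ) (hp : p.Prime) (hn : 2 ≤ n) :
    IsIntervalGraph (zeroDivisorGraph (ZMod (p ^ n))) ∧
    boxicity (zeroDivisorGraph (ZMod (p ^ n))) = 1 := by
  haveI : NeZero (p ^ n) := ⟨pow_ne_zero n hp.pos.ne'⟩
  have hNpos : 0 < p ^ n := pow_pos hp.pos n
  set R := ZMod (p ^ n) with hR
  have hvalne : ∀ x : R, x ≠ 0 → x.val ≠ 0 := by
    intro x hx h
    exact hx ((ZMod.val_eq_zero x).mp h)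
  have hvlt : ∀ x : R, x ≠ 0 → x.val.factorization p < n := by
    intro x hx
    by_contra h
    push_neg at h
    have hdvd : p ^ n ∣ x.val :=
      (hp.pow_dvd_iff_le_factorization (hvalne x hx)).mpr h
    have h1 := Nat.le_of_dvd (Nat.pos_of_ne_zero (hvalne x hx)) hdvd
    have h2 := ZMod.val_lt x
    omega
  have hmul : ∀ x y : R, x ≠ 0 → y ≠ 0 →
      (x * y = 0 ↔ n ≤ x.val.factorization p + y.val.factorization p) := by
    intro x y hx hy
    rw [← ZMod.val_eq_zero, ZMod.val_mul, ← Nat.dvd_iff_mod_eq_zero,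
      hp.pow_dvd_iff_le_factorization (Nat.mul_ne_zero (hvalne x hx) (hvalne y hy)),
      Nat.factorization_mul (hvalne x hx) (hvalne y hy)]
    rfl
  have hrep : BoxRep (zeroDivisorGraph R) 1 := by
    apply boxAux (zeroDivisorGraph R) n
      (A := fun x => (x : R).val.factorization p)
      (e := fun x => ((x : R).val : ℝ) / (4 * ((p ^ n : ℕ) : ℝ)))
    · intro x
      exact hvlt _ x.2.1
    · intro x
      apply div_nonneg (Nat.cast_nonneg _)
      positivity
    · intro x
      have hvx : (((x : R).val : ℝ)) < ((p ^ n : ℕ) : ℝ) := by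
        exact_mod_cast ZMod.val_lt (x : R)
      have h4 : (0:ℝ) < 4 * ((p ^ n : ℕ) : ℝ) := by
        have : (0:ℝ) < ((p ^ n : ℕ) : ℝ) := by exact_mod_cast hNpos
        linarith
      rw [div_lt_iff₀ h4]
      linarith
    · intro x y h
      have h4 : (4 * ((p ^ n : ℕ) : ℝ)) ≠ 0 := by
        have : (0:ℝ) < ((p ^ n : ℕ) : ℝ) := by exact_mod_cast hNpos
        positivity
      rw [div_eq_div_iff h4 h4] at h
      have h2 : ((x : R).val : ℝ) = ((y : R).val : ℝ) := mul_right_cancel₀ h4 h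
      have h3 : (x : R).val = (y : R).val := by exact_mod_cast h2
      exact Subtype.ext (ZMod.val_injective _ h3)
    · intro u v huv
      rw [zeroDivisorGraph, SimpleGraph.fromRel_adj]
      have h1 := hmul (u : R) (v : R) u.2.1 v.2.1
      have h2 := hmul (v : R) (u : R) v.2.1 u.2.1
      constructor
      · rintro ⟨-, h | h⟩
        · exact h1.mp h
        · rw [Nat.add_comm]; exact h2.mp h
      · intro h
        exact ⟨huv, Or.inl (h1.mpr h)⟩
  refine ⟨hrep, ?_⟩
  have h1 : (1 : ℕ) ∈ {ℓ : ℕ | 0 < ℓ ∧ BoxRep (zeroDivisorGraph R) ℓ} := ⟨one_pos, hrep⟩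
  refine le_antisymm (Nat.sInf_le h1) ?_
  exact (Nat.sInf_mem ⟨1, h1⟩).1
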